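/- In the tit-for-tat production dynamic, if v_i·v* > 1 then x_i(t) → ∞ as t → ∞, where v* = max_j v_j. -/

import Mathlib

open Filter Finset

theorem stmt_7
(n : ℕ) (x : ℕ → Fin n → ℝ) (y : ℕ → Fin n → Fin n → ℝ) (v : Fin n → ℝ)
    (hv : ∀ j, 0 < v j)
    (hx : ∀ t i, 0 < x t i)
    (hy : ∀ t i j, 0 < y t i j)
    (hsum : ∀ t i, ∑ j, y t i j = 1)
    (hprod : ∀ t i, x (t + 1) i = ∑ j, v j * (y t j i * x t j))
    (hupd : ∀ t i j, y (t + 1) i j = v j * (y t j i * x t j) / x (t + 1) i)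
(vstar : ℝ) (hmax : ∀ j, v j ≤ vstar) (iStar : Fin n) (hiStar : v iStar = vstar)
    (i : Fin n) (hi : 1 < v i * vstar) :
    Tendsto (fun t => x t i) atTop atTop := by
  have hn : (Finset.univ : Finset (Fin n)).Nonempty := ⟨i, mem_univ i⟩
  set S : ℕ → ℝ := fun t => ∑ j, v j * y t i j with hSdef
  have hSpos : ∀ t, 0 < S t := fun t =>
    Finset.sum_pos (fun j _ => mul_pos (hv j) (hy t i j)) hn
  have hvstar : 0 < vstar := lt_of_lt_of_le (hv iStar) (hmax iStar)
  have hSle : ∀ t, S t ≤ vstar := by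
    intro t
    calc S t ≤ ∑ j, vstar * y t i j := Finset.sum_le_sum fun j _ =>
            mul_le_mul_of_nonneg_right (hmax j) (hy t i j).le
    _ = vstar * ∑ j, y t i j := by rw [Finset.mul_sum]
    _ = vstar := by rw [hsum t i, mul_one]
  have hterm : ∀ t j, y (t+1) j i * x (t+1) j = v i * (y t i j * x t i) := by
    intro t j
    rw [hupd t j i, div_mul_cancel₀]
    exact (hx (t+1) j).ne'
  have key1 : ∀ t, x (t+2) i = v i * x t i * S t := by
    intro t
    rw [show t + 2 = (t+1) + 1 from rfl, hprod (t+1) i]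
    simp only [hterm]
    rw [hSdef, Finset.mul_sum]
    exact Finset.sum_congr rfl fun j _ => by ring
  have key2 : ∀ t j, y (t+2) i j = v j * y t i j / S t := by
    intro t j
    rw [show t + 2 = (t+1) + 1 from rfl, hupd (t+1) i j, hterm,
      show (t+1) + 1 = t + 2 from rfl, key1]
    rw [div_eq_div_iff (mul_pos (mul_pos (hv i) (hx t i)) (hSpos t)).ne' (hSpos t).ne']
    ring
  have key3 : ∀ t, S t ≤ S (t+2) := by
    intro t
    have hS2 : S (t+2) = (∑ j, (v j)^2 * y t i j) / S t := by
      show (∑ j, v j * y (t+2) i j) = (∑ j, (v j)^2 * y t i j) / S t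
      simp only [key2]
      rw [Finset.sum_div]
      exact Finset.sum_congr rfl fun j _ => by
        rw [mul_div_assoc, mul_div_assoc, sq]; ring_nf
    rw [hS2, le_div_iff₀ (hSpos t)]
    have hcs := Finset.sum_mul_sq_le_sq_mul_sq Finset.univ
        (fun j => v j * Real.sqrt (y t i j)) (fun j => Real.sqrt (y t i j))
    have e1 : ∀ j, v j * Real.sqrt (y t i j) * Real.sqrt (y t i j) = v j * y t i j := by
      intro j
      rw [mul_assoc, Real.mul_self_sqrt (hy t i j).le]
    have e2 : ∀ j, (v j * Real.sqrt (y t i j))^2 = (v j)^2 * y t i j := by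
      intro j
      rw [mul_pow, Real.sq_sqrt (hy t i j).le]
    have e3 : ∀ j, (Real.sqrt (y t i j))^2 = y t i j := fun j => Real.sq_sqrt (hy t i j).le
    simp only [e1, e2, e3] at hcs
    rw [hsum t i, mul_one] at hcs
    calc S t * S t = S t ^ 2 := (sq (S t)).symm
    _ ≤ _ := hcs
  -- choice of threshold c
  set c : ℝ := (1 / v i + vstar) / 2 with hcdef
  have hvi := hv i
  have h1v : 1 / v i < vstar := by
    rw [div_lt_iff₀ hvi]
    linarith [hi, mul_comm (v i) vstar]
  have hcpos : 0 < c := by positivity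
  have hclt : c < vstar := by rw [hcdef]; linarith
  have hq1 : 1 < v i * c := by
    have : v i * c = (1 + v i * vstar) / 2 := by
      rw [hcdef]; field_simp
    rw [this]; linarith
  -- y t i iStar ≤ 1
  have hyle : ∀ t, y t i iStar ≤ 1 := by
    intro t
    rw [← hsum t i]
    exact Finset.single_le_sum (fun j _ => (hy t i j).le) (mem_univ iStar)
  -- existence of a time with S > c, from any start
  have hex : ∀ t0, ∃ k, c < S (t0 + 2*k) := by
    intro t0
    by_contra h
    push_neg at h
    have grow : ∀ k, (vstar/c)^k * y t0 i iStar ≤ y (t0 + 2*k) i iStar := by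
      intro k
      induction k with
      | zero => simp
      | succ k ih =>
        have h1 : y (t0 + 2*(k+1)) i iStar
            = vstar * y (t0+2*k) i iStar / S (t0+2*k) := by
          have h2 := key2 (t0 + 2*k) iStar
          rw [hiStar] at h2
          rw [show t0 + 2*(k+1) = t0 + 2*k + 2 by ring, h2]
        rw [h1]
        have hypos := hy (t0+2*k) i iStar
        have hS := hSpos (t0+2*k)
        have hSc := h k
        have step1 : vstar * y (t0+2*k) i iStar / c
            ≤ vstar * y (t0+2*k) i iStar / S (t0+2*k) :=
          div_le_div_of_nonneg_left (by positivity) hS hSc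
        have step2 : (vstar/c)^(k+1) * y t0 i iStar
            ≤ vstar * y (t0+2*k) i iStar / c := by
          calc (vstar/c)^(k+1) * y t0 i iStar
              = (vstar/c) * ((vstar/c)^k * y t0 i iStar) := by ring
          _ ≤ (vstar/c) * y (t0+2*k) i iStar :=
              mul_le_mul_of_nonneg_left ih (by positivity)
          _ = vstar * y (t0+2*k) i iStar / c := by ring
        linarith
    obtain ⟨k, hk⟩ := pow_unbounded_of_one_lt (1 / y t0 i iStar)
      (show 1 < vstar / c from (one_lt_div hcpos).mpr hclt)
    have h0 := hy t0 i iStar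
    have h2 := grow k
    have h3 := hyle (t0 + 2*k)
    rw [div_lt_iff₀ h0] at hk
    nlinarith
  -- monotonicity along parity
  have Smono : ∀ t m, S t ≤ S (t + 2*m) := by
    intro t m
    induction m with
    | zero => simp
    | succ m ih =>
      calc S t ≤ S (t + 2*m) := ih
      _ ≤ S (t + 2*m + 2) := key3 _
      _ = S (t + 2*(m+1)) := by ring_nf
  obtain ⟨k0, hk0⟩ := hex 0
  obtain ⟨k1, hk1⟩ := hex 1
  set T : ℕ := 2*k0 + 2*k1 + 1 with hTdef
  have hST : ∀ t, T ≤ t → c < S t := by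
    intro t ht
    rcases Nat.even_or_odd t with ⟨a, ha⟩ | ⟨a, ha⟩
    · have hak : k0 ≤ a := by omega
      have := Smono (0 + 2*k0) (a - k0)
      have heq : 0 + 2*k0 + 2*(a - k0) = t := by omega
      rw [heq] at this
      exact lt_of_lt_of_le hk0 this
    · have hak : k1 ≤ a := by omega
      have := Smono (1 + 2*k1) (a - k1)
      have heq : 1 + 2*k1 + 2*(a - k1) = t := by omega
      rw [heq] at this
      exact lt_of_lt_of_le hk1 this
  set q : ℝ := v i * c with hqdef
  have hqpos : 0 < q := by positivity
  have hgrow : ∀ t, T ≤ t → q * x t i ≤ x (t+2) i := by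
    intro t ht
    rw [key1 t, hqdef]
    have h1 := hST t ht
    have h2 := hx t i
    nlinarith [mul_nonneg (mul_nonneg hvi.le h2.le) (sub_nonneg.mpr h1.le)]
  have hiter : ∀ s, T ≤ s → ∀ m, q^m * x s i ≤ x (s + 2*m) i := by
    intro s hs m
    induction m with
    | zero => simp
    | succ m ih =>
      have h1 : q * x (s + 2*m) i ≤ x (s + 2*m + 2) i := hgrow _ (by omega)
      have h2 : q * (q^m * x s i) ≤ q * x (s + 2*m) i :=
        mul_le_mul_of_nonneg_left ih hqpos.le
      calc q^(m+1) * x s i = q * (q^m * x s i) := by ring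
    _ ≤ x (s + 2*m + 2) i := le_trans h2 h1
    _ = x (s + 2*(m+1)) i := by ring_nf
  rw [tendsto_atTop]
  intro b
  set m0 : ℝ := min (x T i) (x (T+1) i) with hm0def
  have hm0 : 0 < m0 := lt_min (hx T i) (hx (T+1) i)
  obtain ⟨N, hN⟩ := pow_unbounded_of_one_lt (b / m0) hq1
  rw [eventually_atTop]
  refine ⟨T + 2*N + 2, fun t ht => ?_⟩
  set k := t - T with hkdef
  have hteq : t = T + k % 2 + 2*(k/2) := by omega
  have hnN : N ≤ k / 2 := by omega
  have hs : T ≤ T + k % 2 := by omega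
  have h1 := hiter (T + k % 2) hs (k/2)
  rw [show T + k % 2 + 2*(k/2) = t by omega] at h1
  have hxs : m0 ≤ x (T + k % 2) i := by
    rcases Nat.mod_two_eq_zero_or_one k with h | h <;> rw [h]
    · simp only [Nat.add_zero]
      exact min_le_left _ _
    · exact min_le_right (x T i) (x (T+1) i)
  have hpow : q^N ≤ q^(k/2) := pow_le_pow_right₀ hq1.le hnN
  have hb : b ≤ q^(k/2) * m0 := by
    rw [div_lt_iff₀ hm0] at hN
    nlinarith
  calc b ≤ q^(k/2) * m0 := hb
  _ ≤ q^(k/2) * x (T + k % 2) i := mul_le_mul_of_nonneg_left hxs (by positivity)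
  _ ≤ x t i := h1
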